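/- arXiv:2004.08412 — 2 statements merged into one kernel-verified Lean document; each statement's English description precedes it below -/
import Mathlib

section
/- Let p : ℤ^d → ℝ be nonnegative, finitely supported, and satisfy Σ_r r_j p(r) = 0 for every coordinate j and Σ_r r_j r_ℓ p(r) = χ·δ_{jℓ} for all coordinates j, ℓ, where χ ≥ 0. Let φ : ℝ^d → ℝ be a Schwartz function. Then there exists a constant C > 0 such that for every integer n ≥ 1: Σ_{x ∈ ℤ^d} | n² · Σ_{r ∈ ℤ^d} p(r) · ( φ((x+r)/n) − φ(x/n) ) − (χ/2) · Δφ(x/n) | ≤ C · n^{d−1}. Equivalently, writing the pointwise error as (1/n)·ψ_n(x/n), one has sup_n n^{−d} Σ_{x∈ℤ^d} |ψ_n(x/n)| < ∞. -/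
open Set

noncomputable instance clm3NormedAddCommGroup {d : ℕ} :
    NormedAddCommGroup ((Fin d → ℝ) →L[ℝ] (Fin d → ℝ) →L[ℝ] (Fin d → ℝ) →L[ℝ] ℝ) :=
  ContinuousLinearMap.toNormedAddCommGroup (𝕜 := ℝ) (𝕜₂ := ℝ) (E := Fin d → ℝ)
    (F := (Fin d → ℝ) →L[ℝ] (Fin d → ℝ) →L[ℝ] ℝ) (σ₁₂ := RingHom.id ℝ)

noncomputable instance clm3NormedSpace {d : ℕ} :
    NormedSpace ℝ ((Fin d → ℝ) →L[ℝ] (Fin d → ℝ) →L[ℝ] (Fin d → ℝ) →L[ℝ] ℝ) :=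
  ContinuousLinearMap.toNormedSpace (𝕜 := ℝ) (𝕜₂ := ℝ) (E := Fin d → ℝ)
    (F := (Fin d → ℝ) →L[ℝ] (Fin d → ℝ) →L[ℝ] ℝ) (σ₁₂ := RingHom.id ℝ) (𝕜' := ℝ)

section Taylor
variable {d : ℕ}
local notation "E" => (Fin d → ℝ)

lemma line_hasDerivAt (a v : E) (t : ℝ) : HasDerivAt (fun s : ℝ => a + s • v) v t := by
  simpa using ((hasDerivAt_id t).smul_const v).const_add a

lemma taylor2_bound (f : E → ℝ) (hf : ContDiff ℝ ((⊤:ℕ∞) : WithTop ℕ∞) f) (a v : E) (B : ℝ)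
    (hB : ∀ t ∈ Icc (0:ℝ) 1, ‖fderiv ℝ (fderiv ℝ (fderiv ℝ f)) (a + t • v)‖ ≤ B) :
    |f (a + v) - f a - fderiv ℝ f a v
      - (1/2) * fderiv ℝ (fderiv ℝ f) a v v| ≤ B * ‖v‖^3 := by
  have hf1 : ContDiff ℝ ((⊤:ℕ∞) : WithTop ℕ∞) (fderiv ℝ f) := (hf.fderiv_right (by exact_mod_cast le_top))
  have hf2 : ContDiff ℝ ((⊤:ℕ∞) : WithTop ℕ∞) (fderiv ℝ (fderiv ℝ f)) := (hf1.fderiv_right (by exact_mod_cast le_top))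
  have hB0 : 0 ≤ B := le_trans (norm_nonneg _) (hB 0 (by norm_num))
  set C : ℝ := B * ‖v‖^3 with hC
  have hC0 : 0 ≤ C := by positivity
  have hd0 : ∀ t : ℝ, HasDerivAt (fun s => f (a + s • v)) (fderiv ℝ f (a + t • v) v) t := by
    intro t
    exact ((hf.differentiable (by simp) _).hasFDerivAt.comp_hasDerivAt t (line_hasDerivAt a v t))
  have hd1 : ∀ t : ℝ, HasDerivAt (fun s => fderiv ℝ f (a + s • v) v)
      (fderiv ℝ (fderiv ℝ f) (a + t • v) v v) t := by
    intro t
    have h := ((hf1.differentiable (by simp) _).hasFDerivAt.comp_hasDerivAt t (line_hasDerivAt a v t))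
    simpa using h.clm_apply (hasDerivAt_const t v)
  have hd2 : ∀ t : ℝ, HasDerivAt (fun s => fderiv ℝ (fderiv ℝ f) (a + s • v) v v)
      (fderiv ℝ (fderiv ℝ (fderiv ℝ f)) (a + t • v) v v v) t := by
    intro t
    have h := ((hf2.differentiable (by simp) _).hasFDerivAt.comp_hasDerivAt t (line_hasDerivAt a v t))
    simpa using (h.clm_apply (hasDerivAt_const t v)).clm_apply (hasDerivAt_const t v)
  have hb3 : ∀ t ∈ Icc (0:ℝ) 1, ‖fderiv ℝ (fderiv ℝ (fderiv ℝ f)) (a + t • v) v v v‖ ≤ C := by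
    intro t ht
    set T := fderiv ℝ (fderiv ℝ (fderiv ℝ f)) (a + t • v) with hT
    calc ‖T v v v‖ ≤ ‖T v v‖ * ‖v‖ := (T v v).le_opNorm v
      _ ≤ (‖T v‖ * ‖v‖) * ‖v‖ :=
          mul_le_mul_of_nonneg_right ((T v).le_opNorm v) (norm_nonneg v)
      _ ≤ ((‖T‖ * ‖v‖) * ‖v‖) * ‖v‖ := by
          have := mul_le_mul_of_nonneg_right (ContinuousLinearMap.le_opNorm (𝕜 := ℝ) (𝕜₂ := ℝ)
            (F := (Fin d → ℝ) →L[ℝ] (Fin d → ℝ) →L[ℝ] ℝ) T v) (norm_nonneg v)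
          exact mul_le_mul_of_nonneg_right this (norm_nonneg v)
      _ = ‖T‖ * ‖v‖^3 := by ring
      _ ≤ B * ‖v‖^3 := mul_le_mul_of_nonneg_right (hB t ht) (by positivity)
  -- step 1
  have step1 : ∀ s ∈ Icc (0:ℝ) 1,
      |fderiv ℝ (fderiv ℝ f) (a + s • v) v v - fderiv ℝ (fderiv ℝ f) a v v| ≤ C * s := by
    intro s hs
    have h := norm_image_sub_le_of_norm_deriv_le_segment'
      (f := fun s => fderiv ℝ (fderiv ℝ f) (a + s • v) v v)
      (f' := fun s => fderiv ℝ (fderiv ℝ (fderiv ℝ f)) (a + s • v) v v v)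
      (fun u hu => (hd2 u).hasDerivWithinAt)
      (fun u hu => hb3 u (Ico_subset_Icc_self hu)) s hs
    simpa using h
  -- step 2
  have step2 : ∀ t ∈ Icc (0:ℝ) 1,
      |fderiv ℝ f (a + t • v) v - fderiv ℝ f a v - t * (fderiv ℝ (fderiv ℝ f) a v v)| ≤ C * t := by
    intro t ht
    have hK : ∀ u : ℝ, HasDerivAt
        (fun s => fderiv ℝ f (a + s • v) v - s * (fderiv ℝ (fderiv ℝ f) a v v))
        (fderiv ℝ (fderiv ℝ f) (a + u • v) v v - fderiv ℝ (fderiv ℝ f) a v v) u := by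
      intro u
      have := (hd1 u).sub ((hasDerivAt_id u).mul_const (fderiv ℝ (fderiv ℝ f) a v v))
      simpa [Pi.sub_def] using this
    have h := norm_image_sub_le_of_norm_deriv_le_segment'
      (f := fun s => fderiv ℝ f (a + s • v) v - s * (fderiv ℝ (fderiv ℝ f) a v v))
      (f' := fun s => fderiv ℝ (fderiv ℝ f) (a + s • v) v v - fderiv ℝ (fderiv ℝ f) a v v)
      (fun u hu => (hK u).hasDerivWithinAt)
      (fun u hu => by
        have := step1 u (Ico_subset_Icc_self hu)
        calc ‖fderiv ℝ (fderiv ℝ f) (a + u • v) v v - fderiv ℝ (fderiv ℝ f) a v v‖ ≤ C * u := this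
          _ ≤ C * 1 := mul_le_mul_of_nonneg_left (le_of_lt hu.2) hC0
          _ = C := mul_one C) t ht
    simpa [sub_right_comm] using h
  -- step 3
  have hH : ∀ u : ℝ, HasDerivAt
      (fun s => f (a + s • v) - s * (fderiv ℝ f a v) - s^2/2 * (fderiv ℝ (fderiv ℝ f) a v v))
      (fderiv ℝ f (a + u • v) v - fderiv ℝ f a v - u * (fderiv ℝ (fderiv ℝ f) a v v)) u := by
    intro u
    have h1 : HasDerivAt (fun s : ℝ => s^2/2 * (fderiv ℝ (fderiv ℝ f) a v v))
        (u * (fderiv ℝ (fderiv ℝ f) a v v)) u := by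
      have := ((hasDerivAt_pow 2 u).div_const 2).mul_const (fderiv ℝ (fderiv ℝ f) a v v)
      simpa using this
    have := ((hd0 u).sub ((hasDerivAt_id u).mul_const (fderiv ℝ f a v))).sub h1
    simpa [Pi.sub_def] using this
  have h := norm_image_sub_le_of_norm_deriv_le_segment_01'
    (f := fun s => f (a + s • v) - s * (fderiv ℝ f a v) - s^2/2 * (fderiv ℝ (fderiv ℝ f) a v v))
    (f' := fun s => fderiv ℝ f (a + s • v) v - fderiv ℝ f a v - s * (fderiv ℝ (fderiv ℝ f) a v v))
    (fun u hu => (hH u).hasDerivWithinAt)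
    (fun u hu => by
      have := step2 u (Ico_subset_Icc_self hu)
      calc ‖_‖ ≤ C * u := this
        _ ≤ C * 1 := mul_le_mul_of_nonneg_left (le_of_lt hu.2) hC0
        _ = C := mul_one C)
  rw [hC]
  have e : f (a + v) - f a - fderiv ℝ f a v - (1/2) * fderiv ℝ (fderiv ℝ f) a v v
      = (f (a + (1:ℝ) • v) - 1 * (fderiv ℝ f a v) - 1^2/2 * (fderiv ℝ (fderiv ℝ f) a v v))
        - (f (a + (0:ℝ) • v) - 0 * (fderiv ℝ f a v) - 0^2/2 * (fderiv ℝ (fderiv ℝ f) a v v)) := by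
    simp; ring
  rw [e]
  exact h
end Taylor

open Set

noncomputable def Spi : ℝ := ∑' m : ℕ, ((1 + (m:ℝ))^2)⁻¹

lemma u_summable : Summable (fun m : ℕ => ((1 + (m:ℝ))^2)⁻¹) := by
  have h : Summable (fun m : ℕ => 1 / ((m:ℝ))^2) := Real.summable_one_div_nat_pow.mpr one_lt_two
  have := (summable_nat_add_iff 1).mpr h
  refine this.congr fun m => ?_
  push_cast
  rw [one_div]
  ring_nf

lemma Spi_pos : 0 < Spi :=
  lt_of_lt_of_le (by norm_num : (0:ℝ) < ((1 + ((0:ℕ):ℝ))^2)⁻¹)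
    (Summable.le_tsum u_summable 0 (fun m _ => by positivity))

lemma sum_u_div (n : ℕ) (hn : 1 ≤ n) :
    Summable (fun k : ℕ => ((1 + ((k / n : ℕ):ℝ))^2)⁻¹) ∧
    (∑' k : ℕ, ((1 + ((k / n : ℕ):ℝ))^2)⁻¹) = n * Spi := by
  haveI : NeZero n := ⟨by omega⟩
  set u : ℕ → ℝ := fun m => ((1 + (m:ℝ))^2)⁻¹ with hu
  have hprod : Summable (fun z : ℕ × Fin n => u z.1) := by
    apply (summable_prod_of_nonneg (fun z => by positivity)).mpr
    constructor
    · intro b; exact summable_of_finite_support (Set.toFinite _)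
    · refine (u_summable.mul_left (n:ℝ)).congr fun b => ?_
      rw [tsum_fintype]
      simp [Finset.sum_const, nsmul_eq_mul, hu]
  have hsum : Summable (fun k : ℕ => u (k / n)) := by
    have := hprod.comp_injective (Nat.divModEquiv n).injective
    exact this.congr fun k => rfl
  refine ⟨hsum, ?_⟩
  have h1 : (∑' k : ℕ, u (k / n)) = ∑' z : ℕ × Fin n, u z.1 :=
    (Equiv.tsum_eq (Nat.divModEquiv n) (fun z => u z.1))
  rw [h1, Summable.tsum_prod' hprod (fun b => summable_of_finite_support (Set.toFinite _))]
  rw [show (∑' (b : ℕ) (_ : Fin n), u b) = ∑' b : ℕ, (n:ℝ) * u b from ?_]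
  · rw [tsum_mul_left]; rfl
  · congr 1; funext b
    rw [tsum_fintype]
    simp [Finset.sum_const, nsmul_eq_mul]

lemma sum_nat_bound (n : ℕ) (hn : 1 ≤ n) :
    Summable (fun k : ℕ => ((1 + (k:ℝ)/n)^2)⁻¹) ∧
    (∑' k : ℕ, ((1 + (k:ℝ)/n)^2)⁻¹) ≤ n * Spi := by
  have key : ∀ k : ℕ, ((1 + (k:ℝ)/n)^2)⁻¹ ≤ ((1 + ((k / n : ℕ):ℝ))^2)⁻¹ := by
    intro k
    have h1 : ((k / n : ℕ):ℝ) ≤ (k:ℝ)/n := Nat.cast_div_le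
    apply inv_anti₀ (by positivity)
    apply pow_le_pow_left₀ (by positivity) (by linarith)
  obtain ⟨hs, he⟩ := sum_u_div n hn
  have hsum : Summable (fun k : ℕ => ((1 + (k:ℝ)/n)^2)⁻¹) :=
    Summable.of_nonneg_of_le (fun k => by positivity) key hs
  exact ⟨hsum, le_trans (Summable.tsum_le_tsum key hsum hs) (le_of_eq he)⟩

lemma sum_int_bound (n : ℕ) (hn : 1 ≤ n) :
    Summable (fun k : ℤ => ((1 + |(k:ℝ)|/n)^2)⁻¹) ∧
    (∑' k : ℤ, ((1 + |(k:ℝ)|/n)^2)⁻¹) ≤ 2 * Spi * n := by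
  obtain ⟨hs, he⟩ := sum_nat_bound n hn
  have hn0 : (0:ℝ) < n := by exact_mod_cast hn
  have mono : ∀ k : ℕ, ((1 + ((k:ℝ)+1)/n)^2)⁻¹ ≤ ((1 + (k:ℝ)/n)^2)⁻¹ := by
    intro k
    have h1 : (k:ℝ)/n ≤ ((k:ℝ)+1)/n := by gcongr; linarith
    apply inv_anti₀ (by positivity)
    apply pow_le_pow_left₀ (by positivity) (by linarith)
  set g : ℤ → ℝ := fun k => ((1 + |(k:ℝ)|/n)^2)⁻¹ with hg
  have hposs : Summable (fun k : ℕ => g k) := by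
    refine hs.congr fun k => ?_
    simp [hg]
  have hnegkey : ∀ k : ℕ, g (-((k:ℤ)+1)) = ((1 + ((k:ℝ)+1)/n)^2)⁻¹ := by
    intro k
    simp only [hg]
    congr 3
    push_cast
    rw [abs_of_nonpos (by linarith [Nat.cast_nonneg (α := ℝ) k] : (-((k:ℝ)+1)) ≤ 0)]
    ring
  have hshift : Summable (fun k : ℕ => ((1 + ((k:ℝ)+1)/n)^2)⁻¹) := by
    exact Summable.of_nonneg_of_le (fun k => by positivity) mono hs
  have hnegs : Summable (fun k : ℕ => g (-((k:ℤ)+1))) := by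
    refine hshift.congr fun k => (hnegkey k).symm
  have hsumint : Summable g := Summable.of_nat_of_neg_add_one hposs hnegs
  refine ⟨hsumint, ?_⟩
  rw [tsum_of_nat_of_neg_add_one hposs hnegs]
  have b1 : (∑' k : ℕ, g k) ≤ n * Spi := by
    refine le_trans (le_of_eq (tsum_congr fun k => by simp [hg])) he
  have b2 : (∑' k : ℕ, g (-((k:ℤ)+1))) ≤ n * Spi := by
    refine le_trans (le_of_eq (tsum_congr hnegkey)) ?_
    exact le_trans (Summable.tsum_le_tsum mono hshift hs) he
  linarith


lemma pi_prod_summable {d : ℕ} (g : ℤ → ℝ) (hg0 : ∀ k, 0 ≤ g k) (hg : Summable g) :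
    Summable (fun x : Fin d → ℤ => ∏ j, g (x j)) ∧
    (∑' x : Fin d → ℤ, ∏ j, g (x j)) = (∑' k, g k)^d := by
  induction d with
  | zero =>
    constructor
    · exact summable_of_finite_support (Set.toFinite _)
    · rw [tsum_eq_single (default : Fin 0 → ℤ) (fun b hb => absurd (Subsingleton.elim b default) hb)]
      simp
  | succ d ih =>
    have hs2 : Summable (fun z : ℤ × (Fin d → ℤ) => g z.1 * ∏ j, g (z.2 j)) :=
      Summable.mul_of_nonneg (f := g) (g := fun x : Fin d → ℤ => ∏ j, g (x j)) hg ih.1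
        (fun k => hg0 k) (fun x => Finset.prod_nonneg fun j _ => hg0 _)
    have key : ∀ x : Fin (d+1) → ℤ,
        (∏ j, g (x j)) = g (x 0) * ∏ j : Fin d, g (x j.succ) := by
      intro x
      rw [Fin.prod_univ_succ]
    have hcomp : ∀ x : Fin (d+1) → ℤ,
        g (x 0) * (∏ j : Fin d, g (x j.succ))
          = (fun z : ℤ × (Fin d → ℤ) => g z.1 * ∏ j, g (z.2 j)) (Fin.consEquiv (fun _ => ℤ) |>.symm x) := by
      intro x
      rfl
    constructor
    · have := hs2.comp_injective (Fin.consEquiv (fun _ => ℤ)).symm.injective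
      exact this.congr fun x => ((key x).trans (hcomp x)).symm
    · have h1 : (∑' x : Fin (d+1) → ℤ, ∏ j, g (x j))
          = ∑' z : ℤ × (Fin d → ℤ), g z.1 * ∏ j, g (z.2 j) := by
        rw [tsum_congr (f := fun x : Fin (d+1) → ℤ => ∏ j, g (x j))
          (g := fun x : Fin (d+1) → ℤ => (fun z : ℤ × (Fin d → ℤ) => g z.1 * ∏ j, g (z.2 j))
            ((Fin.consEquiv (fun _ => ℤ)).symm x))
          (fun x => (key x).trans (hcomp x))]
        exact Equiv.tsum_eq (Fin.consEquiv (fun _ => ℤ)).symm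
          (fun z : ℤ × (Fin d → ℤ) => g z.1 * ∏ j, g (z.2 j))
      have hnorm : Summable (fun k => ‖g k‖) := by
        refine hg.congr fun k => ?_
        rw [Real.norm_eq_abs, abs_of_nonneg (hg0 k)]
      have hnorm2 : Summable (fun x : Fin d → ℤ => ‖∏ j, g (x j)‖) := by
        refine ih.1.congr fun x => ?_
        rw [Real.norm_eq_abs, abs_of_nonneg (Finset.prod_nonneg fun j _ => hg0 _)]
      have h2 := tsum_mul_tsum_of_summable_norm (f := g)
        (g := fun x : Fin d → ℤ => ∏ j, g (x j)) hnorm hnorm2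
      rw [h1, ← h2, ih.2, pow_succ]
      ring


lemma one_add_pow_le_aux (t : ℝ) (ht : 0 ≤ t) (k : ℕ) : (1+t)^k ≤ 2^k * (1 + t^k) := by
  rcases le_total t 1 with h | h
  · calc (1+t)^k ≤ 2^k := pow_le_pow_left₀ (by positivity) (by linarith) k
      _ ≤ 2^k * (1 + t^k) := le_mul_of_one_le_right (by positivity)
          (by linarith [pow_nonneg ht k])
  · calc (1+t)^k ≤ (2*t)^k := pow_le_pow_left₀ (by positivity) (by linarith) k
      _ = 2^k * t^k := mul_pow 2 t k
      _ ≤ 2^k * (1 + t^k) := by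
          have : (0:ℝ) < 2^k := by positivity
          nlinarith

lemma third_deriv_norm_eq {d : ℕ} (φ : SchwartzMap (Fin d → ℝ) ℝ) (y : Fin d → ℝ) :
    ‖fderiv ℝ (fderiv ℝ (fderiv ℝ ⇑φ)) y‖ = ‖iteratedFDeriv ℝ 3 (⇑φ) y‖ := by
  calc ‖fderiv ℝ (fderiv ℝ (fderiv ℝ ⇑φ)) y‖
      = ‖iteratedFDeriv ℝ 0 (fderiv ℝ (fderiv ℝ (fderiv ℝ ⇑φ))) y‖ :=
        (norm_iteratedFDeriv_zero).symm
    _ = ‖iteratedFDeriv ℝ 1 (fderiv ℝ (fderiv ℝ ⇑φ)) y‖ :=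
        norm_iteratedFDeriv_fderiv (𝕜 := ℝ) (E := Fin d → ℝ)
          (F := (Fin d → ℝ) →L[ℝ] (Fin d → ℝ) →L[ℝ] ℝ) (n := 0)
    _ = ‖iteratedFDeriv ℝ 2 (fderiv ℝ ⇑φ) y‖ := norm_iteratedFDeriv_fderiv
    _ = ‖iteratedFDeriv ℝ 3 (⇑φ) y‖ := norm_iteratedFDeriv_fderiv

lemma third_decay {d : ℕ} (φ : SchwartzMap (Fin d → ℝ) ℝ) (k : ℕ) :
    ∃ C : ℝ, 0 < C ∧ ∀ y : Fin d → ℝ,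
      (1+‖y‖)^k * ‖fderiv ℝ (fderiv ℝ (fderiv ℝ ⇑φ)) y‖ ≤ C := by
  obtain ⟨C0, hC0, h0⟩ := φ.decay 0 3
  obtain ⟨Ck, hCk, hk⟩ := φ.decay k 3
  refine ⟨2^k * (C0 + Ck), by positivity, fun y => ?_⟩
  rw [third_deriv_norm_eq]
  have hN : (0:ℝ) ≤ ‖iteratedFDeriv ℝ 3 (⇑φ) y‖ := norm_nonneg _
  calc (1+‖y‖)^k * ‖iteratedFDeriv ℝ 3 (⇑φ) y‖
      ≤ (2^k * (1 + ‖y‖^k)) * ‖iteratedFDeriv ℝ 3 (⇑φ) y‖ :=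
        mul_le_mul_of_nonneg_right (one_add_pow_le_aux ‖y‖ (norm_nonneg y) k) hN
    _ = 2^k * (‖iteratedFDeriv ℝ 3 (⇑φ) y‖ + ‖y‖^k * ‖iteratedFDeriv ℝ 3 (⇑φ) y‖) := by ring
    _ ≤ 2^k * (C0 + Ck) := by
        have h0' := h0 y
        simp only [pow_zero, one_mul] at h0'
        have hk' := hk y
        have : (0:ℝ) < 2^k := by positivity
        nlinarith


lemma clm_apply_eq_sum {d : ℕ} (T : (Fin d → ℝ) →L[ℝ] ℝ) (w : Fin d → ℝ) :
    T w = ∑ j, w j * T (Pi.single j 1) := by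
  have hw : w = ∑ j, w j • (Pi.single j (1:ℝ) : Fin d → ℝ) := by
    funext i
    rw [Finset.sum_apply]
    simp [Pi.single_apply]
  conv_lhs => rw [hw]
  rw [map_sum]
  simp [smul_eq_mul]

lemma clm2_apply_eq_sum {d : ℕ} (T : (Fin d → ℝ) →L[ℝ] ((Fin d → ℝ) →L[ℝ] ℝ))
    (w w' : Fin d → ℝ) :
    T w w' = ∑ j, ∑ ℓ, w j * w' ℓ * T (Pi.single j 1) (Pi.single ℓ 1) := by
  have hrow : ∀ ℓ : Fin d, (T w) (Pi.single ℓ 1) =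
      ∑ j, w j * T (Pi.single j 1) (Pi.single ℓ 1) := by
    intro ℓ
    have h := clm_apply_eq_sum (T.flip (Pi.single ℓ 1)) w
    simpa using h
  calc T w w' = ∑ ℓ, w' ℓ * (T w) (Pi.single ℓ 1) := clm_apply_eq_sum (T w) w'
    _ = ∑ ℓ, ∑ j, w j * w' ℓ * T (Pi.single j 1) (Pi.single ℓ 1) := by
        refine Finset.sum_congr rfl fun ℓ _ => ?_
        rw [hrow ℓ, Finset.mul_sum]
        exact Finset.sum_congr rfl fun j _ => by ring
    _ = ∑ j, ∑ ℓ, w j * w' ℓ * T (Pi.single j 1) (Pi.single ℓ 1) := Finset.sum_comm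

lemma moment_identity {d : ℕ} (f : (Fin d → ℝ) → ℝ) (s : Finset (Fin d → ℤ))
    (p : (Fin d → ℤ) → ℝ) (χ : ℝ) (n : ℝ) (hn : n ≠ 0)
    (hm1 : ∀ j : Fin d, ∑ r ∈ s, (r j : ℝ) * p r = 0)
    (hm2 : ∀ j ℓ : Fin d, ∑ r ∈ s, (r j : ℝ) * (r ℓ : ℝ) * p r = if j = ℓ then χ else 0)
    (a : Fin d → ℝ) :
    n^2 * (∑ r ∈ s, p r * (f (a + fun j => (r j : ℝ)/n) - f a))
      - (χ/2) * ∑ ℓ, fderiv ℝ (fderiv ℝ f) a (Pi.single ℓ 1) (Pi.single ℓ 1)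
    = n^2 * ∑ r ∈ s, p r *
        (f (a + fun j => (r j : ℝ)/n) - f a - fderiv ℝ f a (fun j => (r j : ℝ)/n)
          - (1/2) * fderiv ℝ (fderiv ℝ f) a (fun j => (r j : ℝ)/n) (fun j => (r j : ℝ)/n)) := by
  have h1 : ∑ r ∈ s, p r * fderiv ℝ f a (fun j => (r j : ℝ)/n) = 0 := by
    calc ∑ r ∈ s, p r * fderiv ℝ f a (fun j => (r j : ℝ)/n)
        = ∑ r ∈ s, ∑ j, ((r j : ℝ) * p r) * (fderiv ℝ f a (Pi.single j 1) / n) := by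
          refine Finset.sum_congr rfl fun r _ => ?_
          rw [clm_apply_eq_sum (fderiv ℝ f a), Finset.mul_sum]
          exact Finset.sum_congr rfl fun j _ => by ring
      _ = ∑ j, ∑ r ∈ s, ((r j : ℝ) * p r) * (fderiv ℝ f a (Pi.single j 1) / n) :=
          Finset.sum_comm
      _ = 0 := by
          refine Finset.sum_eq_zero fun j _ => ?_
          rw [← Finset.sum_mul, hm1 j, zero_mul]
  have h2 : ∑ r ∈ s, p r * fderiv ℝ (fderiv ℝ f) a (fun j => (r j : ℝ)/n) (fun j => (r j : ℝ)/n)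
      = χ / n^2 * ∑ ℓ, fderiv ℝ (fderiv ℝ f) a (Pi.single ℓ 1) (Pi.single ℓ 1) := by
    calc ∑ r ∈ s, p r * fderiv ℝ (fderiv ℝ f) a (fun j => (r j : ℝ)/n) (fun j => (r j : ℝ)/n)
        = ∑ r ∈ s, ∑ j, ∑ ℓ, ((r j : ℝ) * (r ℓ : ℝ) * p r) *
            (fderiv ℝ (fderiv ℝ f) a (Pi.single j 1) (Pi.single ℓ 1) / n^2) := by
          refine Finset.sum_congr rfl fun r _ => ?_
          rw [clm2_apply_eq_sum (fderiv ℝ (fderiv ℝ f) a), Finset.mul_sum]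
          refine Finset.sum_congr rfl fun j _ => ?_
          rw [Finset.mul_sum]
          refine Finset.sum_congr rfl fun ℓ _ => ?_
          ring
      _ = ∑ j, ∑ ℓ, (∑ r ∈ s, (r j : ℝ) * (r ℓ : ℝ) * p r) *
            (fderiv ℝ (fderiv ℝ f) a (Pi.single j 1) (Pi.single ℓ 1) / n^2) := by
          rw [Finset.sum_comm]
          refine Finset.sum_congr rfl fun j _ => ?_
          rw [Finset.sum_comm]
          refine Finset.sum_congr rfl fun ℓ _ => ?_
          rw [Finset.sum_mul]
      _ = χ / n^2 * ∑ ℓ, fderiv ℝ (fderiv ℝ f) a (Pi.single ℓ 1) (Pi.single ℓ 1) := by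
          rw [Finset.mul_sum]
          rw [Finset.sum_congr rfl fun j _ => Finset.sum_congr rfl fun ℓ _ => by rw [hm2 j ℓ]]
          rw [Finset.sum_comm]
          refine Finset.sum_congr rfl fun ℓ _ => ?_
          rw [Finset.sum_eq_single ℓ]
          · simp; ring
          · intro j _ hj
            simp [if_neg hj]
          · intro h; exact absurd (Finset.mem_univ ℓ) h
  have expand : ∑ r ∈ s, p r *
        (f (a + fun j => (r j : ℝ)/n) - f a - fderiv ℝ f a (fun j => (r j : ℝ)/n)
          - (1/2) * fderiv ℝ (fderiv ℝ f) a (fun j => (r j : ℝ)/n) (fun j => (r j : ℝ)/n))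
      = (∑ r ∈ s, p r * (f (a + fun j => (r j : ℝ)/n) - f a))
        - (∑ r ∈ s, p r * fderiv ℝ f a (fun j => (r j : ℝ)/n))
        - (1/2) * ∑ r ∈ s, p r * fderiv ℝ (fderiv ℝ f) a (fun j => (r j : ℝ)/n) (fun j => (r j : ℝ)/n) := by
    rw [Finset.mul_sum, ← Finset.sum_sub_distrib, ← Finset.sum_sub_distrib]
    refine Finset.sum_congr rfl fun r _ => ?_
    ring
  rw [expand, h1, h2]
  have hn2 : n^2 ≠ 0 := pow_ne_zero 2 hn
  field_simp
  ring


lemma seg_third_bound {d : ℕ} (φ : SchwartzMap (Fin d → ℝ) ℝ) (C₃ R : ℝ)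
    (hdec : ∀ y, (1+‖y‖)^(2*d) * ‖fderiv ℝ (fderiv ℝ (fderiv ℝ (⇑φ))) y‖ ≤ C₃)
    (a v : Fin d → ℝ) (hv : ‖v‖ ≤ R) {t : ℝ} (ht : t ∈ Set.Icc (0:ℝ) 1) :
    ‖fderiv ℝ (fderiv ℝ (fderiv ℝ (⇑φ))) (a + t • v)‖
      ≤ C₃ * (1+R)^(2*d) * ((1+‖a‖)^(2*d))⁻¹ := by
  have hR0 : 0 ≤ R := le_trans (norm_nonneg v) hv
  have htv : ‖t • v‖ ≤ R := by
    rw [norm_smul, Real.norm_eq_abs]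
    have h1 : |t| ≤ 1 := abs_le.mpr ⟨by linarith [ht.1], ht.2⟩
    nlinarith [norm_nonneg v, abs_nonneg t]
  set y := a + t • v with hy
  have hax : ‖a‖ ≤ ‖y‖ + R := by
    have he : a = y - t • v := by rw [hy]; abel
    calc ‖a‖ = ‖y - t • v‖ := by rw [← he]
      _ ≤ ‖y‖ + ‖t • v‖ := norm_sub_le y (t • v)
      _ ≤ ‖y‖ + R := by linarith
  have h2 : 1 + ‖a‖ ≤ (1+R) * (1+‖y‖) := by nlinarith [norm_nonneg y]
  have h3 : (1 + ‖a‖)^(2*d) ≤ (1+R)^(2*d) * (1+‖y‖)^(2*d) := by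
    rw [← mul_pow]
    exact pow_le_pow_left₀ (by positivity) h2 _
  have hpos : (0:ℝ) < (1 + ‖a‖)^(2*d) := by positivity
  have hnn : (0:ℝ) ≤ ‖fderiv ℝ (fderiv ℝ (fderiv ℝ (⇑φ))) y‖ := norm_nonneg _
  rw [← div_eq_mul_inv, le_div_iff₀ hpos]
  calc ‖fderiv ℝ (fderiv ℝ (fderiv ℝ (⇑φ))) y‖ * (1 + ‖a‖)^(2*d)
      ≤ ‖fderiv ℝ (fderiv ℝ (fderiv ℝ (⇑φ))) y‖ * ((1+R)^(2*d) * (1+‖y‖)^(2*d)) :=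
        mul_le_mul_of_nonneg_left h3 hnn
    _ = (1+R)^(2*d) * ((1+‖y‖)^(2*d) * ‖fderiv ℝ (fderiv ℝ (fderiv ℝ (⇑φ))) y‖) := by ring
    _ ≤ (1+R)^(2*d) * C₃ := mul_le_mul_of_nonneg_left (hdec y) (by positivity)
    _ = C₃ * (1+R)^(2*d) := mul_comm _ _

/-- Summed version of the diffusive Taylor estimate: if `p : ℤ^d → ℝ` is nonnegative,
finitely supported, with vanishing first moments and second moments `χ δ_{jℓ}`, and
`φ` is a Schwartz function on `ℝ^d`, then the total (over `x ∈ ℤ^d`) absolute error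
between `n² ∑_r p(r)(φ((x+r)/n) - φ(x/n))` and `(χ/2) Δφ(x/n)` is summable and
bounded by `C n^{d-1}`. -/
theorem rescaled_generator_error_sum_bound {d : ℕ}
    (p : (Fin d → ℤ) → ℝ) (hp : ∀ r, 0 ≤ p r)
    (hfin : (Function.support p).Finite)
    (χ : ℝ) (hχ : 0 ≤ χ)
    (hmom1 : ∀ j : Fin d, ∑ᶠ r : Fin d → ℤ, (r j : ℝ) * p r = 0)
    (hmom2 : ∀ j ℓ : Fin d,
      ∑ᶠ r : Fin d → ℤ, (r j : ℝ) * (r ℓ : ℝ) * p r = if j = ℓ then χ else 0)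
    (φ : SchwartzMap (Fin d → ℝ) ℝ) :
    ∃ C : ℝ, 0 < C ∧ ∀ n : ℕ, 1 ≤ n →
      Summable (fun x : Fin d → ℤ =>
        |(n : ℝ) ^ 2 *
            (∑ᶠ r : Fin d → ℤ, p r *
              (φ (fun j => ((x j : ℝ) + (r j : ℝ)) / n) - φ (fun j => (x j : ℝ) / n)))
          - (χ / 2) *
              ∑ ℓ : Fin d,
                iteratedFDeriv ℝ 2 (fun y => φ y) (fun j => (x j : ℝ) / n)
                  (fun _ => Pi.single ℓ 1)|) ∧
      (∑' x : Fin d → ℤ,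
        |(n : ℝ) ^ 2 *
            (∑ᶠ r : Fin d → ℤ, p r *
              (φ (fun j => ((x j : ℝ) + (r j : ℝ)) / n) - φ (fun j => (x j : ℝ) / n)))
          - (χ / 2) *
              ∑ ℓ : Fin d,
                iteratedFDeriv ℝ 2 (fun y => φ y) (fun j => (x j : ℝ) / n)
                  (fun _ => Pi.single ℓ 1)|)
        ≤ C * (n : ℝ) ^ (d - 1) := by
  classical
  have hsmooth : ContDiff ℝ ((⊤:ℕ∞) : WithTop ℕ∞) (⇑φ) := φ.smooth ⊤
  set s := hfin.toFinset with hs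
  have hm1 : ∀ j : Fin d, ∑ r ∈ s, (r j : ℝ) * p r = 0 := by
    intro j
    rw [← hmom1 j]
    refine (finsum_eq_sum_of_support_subset _ ?_).symm
    intro r hr
    simp only [Function.mem_support] at hr
    have hpr : p r ≠ 0 := fun h => hr (by rw [h, mul_zero])
    exact Finset.mem_coe.mpr (hfin.mem_toFinset.mpr hpr)
  have hm2 : ∀ j ℓ : Fin d,
      ∑ r ∈ s, (r j : ℝ) * (r ℓ : ℝ) * p r = if j = ℓ then χ else 0 := by
    intro j ℓ
    rw [← hmom2 j ℓ]
    refine (finsum_eq_sum_of_support_subset _ ?_).symm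
    intro r hr
    simp only [Function.mem_support] at hr
    have hpr : p r ≠ 0 := fun h => hr (by rw [h, mul_zero])
    exact Finset.mem_coe.mpr (hfin.mem_toFinset.mpr hpr)
  set R : ℝ := ∑ r ∈ s, ‖(fun j => (r j : ℝ) : Fin d → ℝ)‖ with hR
  have hR0 : 0 ≤ R := Finset.sum_nonneg fun r _ => norm_nonneg _
  have hRr : ∀ r ∈ s, ‖(fun j => (r j : ℝ) : Fin d → ℝ)‖ ≤ R := fun r hr =>
    Finset.single_le_sum (f := fun q : Fin d → ℤ => ‖(fun j => (q j : ℝ) : Fin d → ℝ)‖)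
      (fun i _ => norm_nonneg _) hr
  obtain ⟨C₃, hC₃pos, hdec⟩ := third_decay φ (2*d)
  set P : ℝ := ∑ r ∈ s, p r with hP
  have hP0 : 0 ≤ P := Finset.sum_nonneg fun r _ => hp r
  have hSpi := Spi_pos
  set K : ℝ := P * R^3 * C₃ * (1+R)^(2*d) * (2*Spi)^d with hK
  have hK0 : 0 ≤ K := by
    apply mul_nonneg
    apply mul_nonneg
    apply mul_nonneg
    apply mul_nonneg hP0 (by positivity)
    · exact le_of_lt hC₃pos
    · positivity
    · positivity
  refine ⟨K + 1, by linarith, fun n hn => ?_⟩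
  have hn0 : (0:ℝ) < n := by exact_mod_cast hn
  have hnne : (n:ℝ) ≠ 0 := ne_of_gt hn0
  have hn1 : (1:ℝ) ≤ n := by exact_mod_cast hn
  set g : ℤ → ℝ := fun k => ((1 + |(k:ℝ)|/n)^2)⁻¹ with hg
  have hg0 : ∀ k, 0 ≤ g k := fun k => by positivity
  obtain ⟨hgs, hgb⟩ := sum_int_bound n hn
  obtain ⟨hFs, hFe⟩ := pi_prod_summable (d := d) g hg0 hgs
  set a : (Fin d → ℤ) → (Fin d → ℝ) := fun x j => (x j : ℝ)/n with ha
  -- rewriting of the error term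
  have hrw : ∀ x : Fin d → ℤ,
      ((n:ℝ) ^ 2 *
          (∑ᶠ r : Fin d → ℤ, p r *
            (φ (fun j => ((x j : ℝ) + (r j : ℝ)) / n) - φ (fun j => (x j : ℝ) / n)))
        - (χ / 2) *
            ∑ ℓ : Fin d,
              iteratedFDeriv ℝ 2 (fun y => φ y) (fun j => (x j : ℝ) / n)
                (fun _ => Pi.single ℓ 1))
      = (n:ℝ)^2 * ∑ r ∈ s, p r *
          (φ (a x + fun j => (r j : ℝ)/(n:ℝ)) - φ (a x)
            - fderiv ℝ (⇑φ) (a x) (fun j => (r j : ℝ)/(n:ℝ))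
            - (1/2) * fderiv ℝ (fderiv ℝ (⇑φ)) (a x) (fun j => (r j : ℝ)/(n:ℝ))
                (fun j => (r j : ℝ)/(n:ℝ))) := by
    intro x
    have hfin_eq : (∑ᶠ r : Fin d → ℤ, p r *
          (φ (fun j => ((x j : ℝ) + (r j : ℝ)) / n) - φ (fun j => (x j : ℝ) / n)))
        = ∑ r ∈ s, p r * (φ (a x + fun j => (r j : ℝ)/(n:ℝ)) - φ (a x)) := by
      rw [finsum_eq_sum_of_support_subset]
      · refine Finset.sum_congr rfl fun r _ => ?_
        have harg : (fun j => ((x j : ℝ) + (r j : ℝ)) / n)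
            = a x + fun j => (r j : ℝ)/(n:ℝ) := by
          funext j
          simp only [ha, Pi.add_apply]
          ring
        rw [harg]
      · intro r hr
        simp only [Function.mem_support] at hr
        have hpr : p r ≠ 0 := fun h => hr (by rw [h, zero_mul])
        exact Finset.mem_coe.mpr (hfin.mem_toFinset.mpr hpr)
    have hit : ∀ ℓ : Fin d,
        iteratedFDeriv ℝ 2 (fun y => φ y) (fun j => (x j : ℝ) / n) (fun _ => Pi.single ℓ 1)
        = fderiv ℝ (fderiv ℝ (⇑φ)) (a x) (Pi.single ℓ 1) (Pi.single ℓ 1) := by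
      intro ℓ
      rw [iteratedFDeriv_two_apply]
    rw [hfin_eq]
    rw [Finset.sum_congr rfl fun ℓ _ => hit ℓ]
    exact moment_identity (⇑φ) s p χ (n:ℝ) hnne hm1 hm2 (a x)
  -- pointwise bound
  have key : ∀ x : Fin d → ℤ,
      |(n : ℝ) ^ 2 *
          (∑ᶠ r : Fin d → ℤ, p r *
            (φ (fun j => ((x j : ℝ) + (r j : ℝ)) / n) - φ (fun j => (x j : ℝ) / n)))
        - (χ / 2) *
            ∑ ℓ : Fin d,
              iteratedFDeriv ℝ 2 (fun y => φ y) (fun j => (x j : ℝ) / n)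
                (fun _ => Pi.single ℓ 1)|
      ≤ (P * R^3 * C₃ * (1+R)^(2*d) / n) * ∏ j, g (x j) := by
    intro x
    rw [hrw x]
    set B : ℝ := C₃ * (1+R)^(2*d) * ∏ j, g (x j) with hB
    have hprodpos : (0:ℝ) < ∏ j, (1 + |(x j : ℝ)|/n)^2 :=
      Finset.prod_pos fun j _ => by positivity
    have hginv : (∏ j, g (x j)) = (∏ j, (1 + |(x j : ℝ)|/n)^2)⁻¹ := by
      rw [← Finset.prod_inv_distrib]
    have hB0 : 0 ≤ B := by
      have : (0:ℝ) ≤ ∏ j, g (x j) := Finset.prod_nonneg fun j _ => hg0 _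
      positivity
    have haj : ∀ j, (1 + |(x j : ℝ)|/n) ≤ 1 + ‖a x‖ := by
      intro j
      have h1 : |a x j| ≤ ‖a x‖ := by
        have := norm_le_pi_norm (a x) j
        simpa [Real.norm_eq_abs] using this
      have h2 : |a x j| = |(x j : ℝ)|/n := by
        simp only [ha]
        rw [abs_div, abs_of_pos hn0]
      linarith [h2 ▸ h1]
    have hQle : ∏ j, (1 + |(x j : ℝ)|/n)^2 ≤ (1 + ‖a x‖)^(2*d) := by
      have : (1 + ‖a x‖)^(2*d) = ∏ _j : Fin d, (1 + ‖a x‖)^2 := by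
        rw [Finset.prod_const, Finset.card_univ, Fintype.card_fin, ← pow_mul, mul_comm]
      rw [this]
      refine Finset.prod_le_prod (fun j _ => by positivity) fun j _ => ?_
      exact pow_le_pow_left₀ (by positivity) (haj j) 2
    -- third derivative bound along segments
    have hEbound : ∀ r ∈ s,
        |φ (a x + fun j => (r j : ℝ)/(n:ℝ)) - φ (a x)
            - fderiv ℝ (⇑φ) (a x) (fun j => (r j : ℝ)/(n:ℝ))
            - (1/2) * fderiv ℝ (fderiv ℝ (⇑φ)) (a x) (fun j => (r j : ℝ)/(n:ℝ))
                (fun j => (r j : ℝ)/(n:ℝ))|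
        ≤ B * (R/n)^3 := by
      intro r hr
      have hvnorm : ‖(fun j => (r j : ℝ)/(n:ℝ) : Fin d → ℝ)‖ ≤ R/n := by
        have hvs : (fun j => (r j : ℝ)/(n:ℝ) : Fin d → ℝ)
            = ((n:ℝ)⁻¹) • (fun j => (r j : ℝ) : Fin d → ℝ) := by
          funext j
          simp [div_eq_inv_mul]
        rw [hvs, norm_smul, norm_inv, Real.norm_natCast, inv_mul_eq_div]
        gcongr
        exact hRr r hr
      have hvR : ‖(fun j => (r j : ℝ)/(n:ℝ) : Fin d → ℝ)‖ ≤ R := by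
        refine le_trans hvnorm ?_
        rw [div_le_iff₀ hn0]
        nlinarith
      have hinv : ((1+‖a x‖)^(2*d))⁻¹ ≤ ∏ j, g (x j) := by
        rw [hginv]
        exact inv_anti₀ hprodpos hQle
      have hBseg : ∀ t ∈ Set.Icc (0:ℝ) 1,
          ‖fderiv ℝ (fderiv ℝ (fderiv ℝ (⇑φ)))
            (a x + t • (fun j => (r j : ℝ)/(n:ℝ) : Fin d → ℝ))‖ ≤ B := by
        intro t ht
        refine le_trans (seg_third_bound φ C₃ R hdec (a x) _ hvR ht) ?_
        rw [hB]
        exact mul_le_mul_of_nonneg_left hinv (by positivity)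
      have htay := taylor2_bound (⇑φ) hsmooth (a x) (fun j => (r j : ℝ)/(n:ℝ)) B hBseg
      refine le_trans htay ?_
      have hRn : ‖(fun j => (r j : ℝ)/(n:ℝ) : Fin d → ℝ)‖^3 ≤ (R/n)^3 :=
        pow_le_pow_left₀ (norm_nonneg _) hvnorm 3
      exact mul_le_mul_of_nonneg_left hRn hB0
    -- sum up
    have habs : |(n:ℝ)^2 * ∑ r ∈ s, p r *
          (φ (a x + fun j => (r j : ℝ)/(n:ℝ)) - φ (a x)
            - fderiv ℝ (⇑φ) (a x) (fun j => (r j : ℝ)/(n:ℝ))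
            - (1/2) * fderiv ℝ (fderiv ℝ (⇑φ)) (a x) (fun j => (r j : ℝ)/(n:ℝ))
                (fun j => (r j : ℝ)/(n:ℝ)))|
        ≤ (n:ℝ)^2 * ∑ r ∈ s, p r * (B * (R/n)^3) := by
      rw [abs_mul, abs_of_nonneg (by positivity : (0:ℝ) ≤ (n:ℝ)^2)]
      refine mul_le_mul_of_nonneg_left ?_ (by positivity)
      refine le_trans (Finset.abs_sum_le_sum_abs _ _) ?_
      refine Finset.sum_le_sum fun r hr => ?_
      rw [abs_mul, abs_of_nonneg (hp r)]
      exact mul_le_mul_of_nonneg_left (hEbound r hr) (hp r)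
    refine le_trans habs ?_
    rw [← Finset.sum_mul, ← hP, hB]
    rw [show ∀ Q : ℝ, (n:ℝ)^2 * (P * ((C₃ * (1+R)^(2*d) * Q) * (R/n)^3))
        = (P * R^3 * C₃ * (1+R)^(2*d) / n) * Q from fun Q => by field_simp]
  -- summability and final bound
  have hcoef0 : 0 ≤ P * R^3 * C₃ * (1+R)^(2*d) / n := by positivity
  have hsummable : Summable (fun x : Fin d → ℤ =>
      |(n : ℝ) ^ 2 *
          (∑ᶠ r : Fin d → ℤ, p r *
            (φ (fun j => ((x j : ℝ) + (r j : ℝ)) / n) - φ (fun j => (x j : ℝ) / n)))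
        - (χ / 2) *
            ∑ ℓ : Fin d,
              iteratedFDeriv ℝ 2 (fun y => φ y) (fun j => (x j : ℝ) / n)
                (fun _ => Pi.single ℓ 1)|) :=
    Summable.of_nonneg_of_le (fun x => abs_nonneg _) key (hFs.mul_left _)
  refine ⟨hsummable, ?_⟩
  have hpow : (n:ℝ)^d / n ≤ (n:ℝ)^(d-1) := by
    rcases d with _ | k
    · simp only [pow_zero, Nat.zero_sub, pow_zero]
      rw [div_le_one hn0]
      exact hn1
    · rw [Nat.succ_sub_one, pow_succ]
      rw [mul_div_assoc, div_self hnne, mul_one]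
  calc (∑' x : Fin d → ℤ, |(n : ℝ) ^ 2 *
          (∑ᶠ r : Fin d → ℤ, p r *
            (φ (fun j => ((x j : ℝ) + (r j : ℝ)) / n) - φ (fun j => (x j : ℝ) / n)))
        - (χ / 2) *
            ∑ ℓ : Fin d,
              iteratedFDeriv ℝ 2 (fun y => φ y) (fun j => (x j : ℝ) / n)
                (fun _ => Pi.single ℓ 1)|)
      ≤ ∑' x : Fin d → ℤ, (P * R^3 * C₃ * (1+R)^(2*d) / n) * ∏ j, g (x j) :=
        Summable.tsum_le_tsum key hsummable (hFs.mul_left _)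
    _ = (P * R^3 * C₃ * (1+R)^(2*d) / n) * ∑' x : Fin d → ℤ, ∏ j, g (x j) := tsum_mul_left
    _ = (P * R^3 * C₃ * (1+R)^(2*d) / n) * (∑' k : ℤ, g k)^d := by rw [hFe]
    _ ≤ (P * R^3 * C₃ * (1+R)^(2*d) / n) * (2 * Spi * n)^d := by
        refine mul_le_mul_of_nonneg_left ?_ hcoef0
        exact pow_le_pow_left₀ (tsum_nonneg hg0) hgb d
    _ = K * ((n:ℝ)^d / n) := by
        rw [hK]
        field_simp
        ring
    _ ≤ K * (n:ℝ)^(d-1) := mul_le_mul_of_nonneg_left hpow hK0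
    _ ≤ (K+1) * (n:ℝ)^(d-1) := by
        have hpnn : (0:ℝ) ≤ (n:ℝ)^(d-1) := by positivity
        nlinarith
end

section
/- Let g : ℕ → ℝ with g(0) = 1, and let 𝔡 : ℕ × ℕ → ℝ satisfy the recursion 𝔡(m, n+1) = Σ_{j=0}^{m} g(m−j)·𝔡(j, n) for all m, n ∈ ℕ. Then for all s ∈ ℕ, all u, v ∈ ℝ, and all a, b ∈ ℕ with a ≥ 1: Σ_{r=0}^{s} u^r · v^{s−r} · ( 𝔡(r, a−1)·𝔡(s−r, b+1) − 𝔡(r, a)·𝔡(s−r, b) ) = Σ_{ℓ=0}^{s−1} ( v^{s−ℓ} − u^{s−ℓ} ) · g(s−ℓ) · Σ_{r=0}^{ℓ} u^r · v^{ℓ−r} · 𝔡(r, a−1)·𝔡(ℓ−r, b). -/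
open Finset in
private lemma tri_swap (s : ℕ) (f : ℕ → ℕ → ℝ) :
    ∑ r ∈ range (s + 1), ∑ k ∈ range (s - r + 1), f r k
      = ∑ k ∈ range (s + 1), ∑ r ∈ range (s - k + 1), f r k :=
  Finset.sum_comm' (by intro x y; simp only [mem_range]; omega)


/-- Single-site gradient identity for duality polynomials: if `𝔡` satisfies the
convolution recursion `𝔡 m (n+1) = ∑_{j≤m} g(m-j) 𝔡 j n` with `g 0 = 1`, then for all
`s`, `u`, `v` and `a ≥ 1`, `b`:
`∑_{r=0}^s u^r v^{s-r} (𝔡(r,a-1) 𝔡(s-r,b+1) - 𝔡(r,a) 𝔡(s-r,b))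
  = ∑_{ℓ=0}^{s-1} (v^{s-ℓ} - u^{s-ℓ}) g(s-ℓ) ∑_{r=0}^{ℓ} u^r v^{ℓ-r} 𝔡(r,a-1) 𝔡(ℓ-r,b)`. -/
theorem single_site_gradient_identity (g : ℕ → ℝ) (hg : g 0 = 1)
    (𝔡 : ℕ → ℕ → ℝ)
    (hrec : ∀ m n : ℕ, 𝔡 m (n + 1) = ∑ j ∈ Finset.range (m + 1), g (m - j) * 𝔡 j n) :
    ∀ (s : ℕ) (u v : ℝ) (a b : ℕ), 1 ≤ a →
      ∑ r ∈ Finset.range (s + 1),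
          u ^ r * v ^ (s - r) * (𝔡 r (a - 1) * 𝔡 (s - r) (b + 1) - 𝔡 r a * 𝔡 (s - r) b)
        = ∑ ℓ ∈ Finset.range s,
            (v ^ (s - ℓ) - u ^ (s - ℓ)) * g (s - ℓ) *
              ∑ r ∈ Finset.range (ℓ + 1),
                u ^ r * v ^ (ℓ - r) * (𝔡 r (a - 1) * 𝔡 (ℓ - r) b) := by
  open Finset in
  intro s u v a b ha
  obtain ⟨a', rfl⟩ : ∃ a', a = a' + 1 := ⟨a - 1, by omega⟩
  simp only [Nat.add_sub_cancel]
  set S : ℕ → ℝ := fun ℓ => ∑ r ∈ range (ℓ + 1),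
      u ^ r * v ^ (ℓ - r) * (𝔡 r a' * 𝔡 (ℓ - r) b) with hS
  -- A part
  have hA : ∑ r ∈ range (s + 1), u ^ r * v ^ (s - r) * (𝔡 r a' * 𝔡 (s - r) (b + 1))
      = ∑ k ∈ range (s + 1), v ^ k * g k * S (s - k) := by
    have h1 : ∀ r ∈ range (s + 1),
        u ^ r * v ^ (s - r) * (𝔡 r a' * 𝔡 (s - r) (b + 1))
          = ∑ k ∈ range (s - r + 1),
              v ^ k * g k * (u ^ r * v ^ ((s - k) - r) * (𝔡 r a' * 𝔡 ((s - k) - r) b)) := by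
      intro r hr
      rw [mem_range] at hr
      rw [hrec, ← sum_range_reflect
        (fun k => v ^ k * g k * (u ^ r * v ^ ((s - k) - r) * (𝔡 r a' * 𝔡 ((s - k) - r) b)))
        (s - r + 1)]
      simp only [Finset.mul_sum]
      refine Finset.sum_congr rfl fun j hj => ?_
      rw [mem_range] at hj
      have e1 : s - r + 1 - 1 - j = s - r - j := by omega
      have e2 : s - (s - r - j) - r = j := by omega
      have e3 : (s : ℕ) - r = (s - r - j) + j := by omega
      rw [e1, e2, e3, pow_add]
      simp only [Nat.add_sub_cancel]
      ring
    rw [Finset.sum_congr rfl h1, tri_swap]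
    refine Finset.sum_congr rfl fun k hk => ?_
    rw [hS, ← Finset.mul_sum]
  -- B part
  have hB : ∑ r ∈ range (s + 1), u ^ r * v ^ (s - r) * (𝔡 r (a' + 1) * 𝔡 (s - r) b)
      = ∑ k ∈ range (s + 1), u ^ k * g k * S (s - k) := by
    rw [← sum_range_reflect
      (fun r => u ^ r * v ^ (s - r) * (𝔡 r (a' + 1) * 𝔡 (s - r) b)) (s + 1)]
    have h1 : ∀ r ∈ range (s + 1),
        u ^ (s + 1 - 1 - r) * v ^ (s - (s + 1 - 1 - r)) *
            (𝔡 (s + 1 - 1 - r) (a' + 1) * 𝔡 (s - (s + 1 - 1 - r)) b)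
          = ∑ k ∈ range (s - r + 1),
              u ^ k * g k * (u ^ ((s - k) - r) * v ^ r * (𝔡 ((s - k) - r) a' * 𝔡 r b)) := by
      intro r hr
      rw [mem_range] at hr
      have e0 : s + 1 - 1 - r = s - r := by omega
      have e0' : s - (s - r) = r := by omega
      rw [e0, e0', hrec, ← sum_range_reflect
        (fun k => u ^ k * g k * (u ^ ((s - k) - r) * v ^ r * (𝔡 ((s - k) - r) a' * 𝔡 r b)))
        (s - r + 1)]
      simp only [Finset.sum_mul, Finset.mul_sum]
      refine Finset.sum_congr rfl fun j hj => ?_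
      rw [mem_range] at hj
      have e1 : s - r + 1 - 1 - j = s - r - j := by omega
      have e2 : s - (s - r - j) - r = j := by omega
      have e3 : (s : ℕ) - r = (s - r - j) + j := by omega
      rw [e1, e2, e3, pow_add]
      simp only [Nat.add_sub_cancel]
      ring
    rw [Finset.sum_congr rfl h1, tri_swap]
    refine Finset.sum_congr rfl fun k hk => ?_
    rw [← Finset.mul_sum]
    congr 1
    show _ = ∑ r ∈ range (s - k + 1), u ^ r * v ^ (s - k - r) * (𝔡 r a' * 𝔡 (s - k - r) b)
    rw [← sum_range_reflect
      (fun r => u ^ r * v ^ (s - k - r) * (𝔡 r a' * 𝔡 (s - k - r) b)) (s - k + 1)]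
    refine Finset.sum_congr rfl fun r hr => ?_
    rw [mem_range] at hr
    have e1 : s - k + 1 - 1 - r = s - k - r := by omega
    have e2 : s - k - (s - k - r) = r := by omega
    rw [e1, e2]
  -- combine
  have hL : ∑ r ∈ range (s + 1),
      u ^ r * v ^ (s - r) * (𝔡 r a' * 𝔡 (s - r) (b + 1) - 𝔡 r (a' + 1) * 𝔡 (s - r) b)
      = ∑ k ∈ range (s + 1), (v ^ k - u ^ k) * g k * S (s - k) := by
    calc ∑ r ∈ range (s + 1),
        u ^ r * v ^ (s - r) * (𝔡 r a' * 𝔡 (s - r) (b + 1) - 𝔡 r (a' + 1) * 𝔡 (s - r) b)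
        = ∑ r ∈ range (s + 1), (u ^ r * v ^ (s - r) * (𝔡 r a' * 𝔡 (s - r) (b + 1))
            - u ^ r * v ^ (s - r) * (𝔡 r (a' + 1) * 𝔡 (s - r) b)) := by
          refine Finset.sum_congr rfl fun r _ => by ring
      _ = _ := by
          rw [Finset.sum_sub_distrib, hA, hB, ← Finset.sum_sub_distrib]
          refine Finset.sum_congr rfl fun k _ => by ring
  rw [hL]
  rw [← sum_range_reflect (fun k => (v ^ k - u ^ k) * g k * S (s - k)) (s + 1),
    Finset.sum_range_succ]
  have e0 : s + 1 - 1 - s = 0 := by omega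
  rw [e0]
  simp only [pow_zero, sub_self, zero_mul, add_zero]
  refine Finset.sum_congr rfl fun ℓ hℓ => ?_
  rw [mem_range] at hℓ
  have e1 : s + 1 - 1 - ℓ = s - ℓ := by omega
  have e2 : s - (s - ℓ) = ℓ := by omega
  rw [e1, e2]
end
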